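/- Suppose the conductance values satisfy 0 ≤ g{i,j} ≤ 1 for every edge of G, the potential function φ satisfies the boundary conditions φ(vIN) = N − 1 and φ(vOUT) = 0, φ satisfies the Kirchhoff equation at every vertex i ∉ {vIN, vOUT}, and the penalties vanish: O(vOUT) = 0, O(i) = 1 for every vertex i ≠ vOUT, and B(i) = 0 for every vertex i. Then g takes only the values 0 and 1, and the set of edges e with g{e} = 1 is exactly the edge set of a Hamiltonian path in G from vIN to vOUT; moreover, along each arc of this path (oriented from vIN toward vOUT) the potential drops by exactly 1 and the directed current equals 1. -/

import Mathlib

/-- main theorem, analytic form: If the conductances lie in `[0,1]`, the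
potential satisfies the boundary conditions and the Kirchhoff equations at all non-terminal
vertices, and the penalties vanish, then the conductance configuration is `{0,1}`-valued,
the edges of conductance `1` form exactly the edge set of a Hamiltonian path from `vIN` to
`vOUT`, and along each arc of this path (oriented from `vIN` to `vOUT`, i.e. along each dart
of the walk) the potential drops by exactly `1` and the directed current equals `1`. -/
theorem global_minimizer_is_hamiltonian_path
    {V : Type*} [Fintype V] [DecidableEq V]
    (G : SimpleGraph V) [DecidableRel G.Adj]
    (N : ℕ) (hNcard : N = Fintype.card V) (hN3 : 3 ≤ N)
    (vIN vOUT : V) (hne : vIN ≠ vOUT)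
    (hdegIN : G.degree vIN = 1) (hdegOUT : G.degree vOUT = 1)
    -- conductance configuration, with values in [0,1] on every edge
    (g : Sym2 V → ℝ) (hg0 : ∀ e ∈ G.edgeSet, 0 ≤ g e) (hg1 : ∀ e ∈ G.edgeSet, g e ≤ 1)
    -- potential with the boundary conditions
    (φ : V → ℝ) (hφIN : φ vIN = (N : ℝ) - 1) (hφOUT : φ vOUT = 0)
    -- directed currents via Ohm's law
    (J : V → V → ℝ) (hJ : ∀ i j, J i j = g s(i, j) * (φ i - φ j))
    -- Kirchhoff equation at every non-terminal vertex
    (hKirchhoff : ∀ i, i ≠ vIN → i ≠ vOUT → ∑ j ∈ G.neighborFinset i, J i j = 0)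
    -- out-flow
    (O : V → ℝ) (hO : ∀ i, O i = ∑ j ∈ G.neighborFinset i, max (J i j) 0)
    -- local branching penalty (sum over unordered pairs of distinct neighbors)
    (B : V → ℝ)
    (hB : ∀ i, B i =
      (1 / 2) * ∑ p ∈ (G.neighborFinset i).offDiag, max (J i p.1) 0 * max (J i p.2) 0)
    -- vanishing of the penalties
    (hOout : O vOUT = 0) (hOone : ∀ i, i ≠ vOUT → O i = 1)
    (hBzero : ∀ i, B i = 0) :
    (∀ e ∈ G.edgeSet, g e = 0 ∨ g e = 1) ∧
    ∃ p : G.Walk vIN vOUT, p.IsHamiltonian ∧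
      (∀ e ∈ G.edgeSet, g e = 1 ↔ e ∈ p.edges) ∧
      (∀ d ∈ p.darts, φ d.fst - φ d.snd = 1 ∧ J d.fst d.snd = 1) := by
  classical
  -- antisymmetry of the current
  have hJanti : ∀ i j : V, J j i = - J i j := by
    intro i j
    rw [hJ, hJ, Sym2.eq_swap]
    ring
  -- existence and uniqueness of the successor at each non-sink vertex
  have hsucc : ∀ i, i ≠ vOUT → ∃ j, j ∈ G.neighborFinset i ∧ J i j = 1 ∧
      ∀ k ∈ G.neighborFinset i, k ≠ j → J i k ≤ 0 := by
    intro i hi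
    have hsum : ∑ j ∈ G.neighborFinset i, max (J i j) 0 = 1 := by
      rw [← hO]; exact hOone i hi
    have hpos : ∃ j ∈ G.neighborFinset i, 0 < max (J i j) 0 := by
      by_contra h
      push_neg at h
      have h0 : ∑ j ∈ G.neighborFinset i, max (J i j) 0 = 0 :=
        Finset.sum_eq_zero fun j hj => le_antisymm (h j hj) (le_max_right _ _)
      rw [h0] at hsum; norm_num at hsum
    obtain ⟨j, hjmem, hjpos⟩ := hpos
    have hBz : ∀ q ∈ (G.neighborFinset i).offDiag, max (J i q.1) 0 * max (J i q.2) 0 = 0 := by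
      have h0 : ∑ q ∈ (G.neighborFinset i).offDiag, max (J i q.1) 0 * max (J i q.2) 0 = 0 := by
        have hb := hBzero i; rw [hB] at hb; linarith
      exact fun q hq => (Finset.sum_eq_zero_iff_of_nonneg
        (fun q _ => mul_nonneg (le_max_right _ _) (le_max_right _ _))).mp h0 q hq
    have hle : ∀ k ∈ G.neighborFinset i, k ≠ j → J i k ≤ 0 := by
      intro k hk hkj
      have hpk : (j, k) ∈ (G.neighborFinset i).offDiag :=
        Finset.mem_offDiag.mpr ⟨hjmem, hk, hkj.symm⟩
      have hz := hBz (j, k) hpk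
      have h2 : max (J i k) 0 = 0 := by
        rcases mul_eq_zero.mp hz with h | h
        · exact absurd h (ne_of_gt hjpos)
        · exact h
      calc J i k ≤ max (J i k) 0 := le_max_left _ _
        _ = 0 := h2
    have hJj : J i j = 1 := by
      have hsingle : ∑ k ∈ G.neighborFinset i, max (J i k) 0 = max (J i j) 0 := by
        apply Finset.sum_eq_single_of_mem j hjmem
        intro k hk hkj
        exact max_eq_right (hle k hk hkj)
      rw [hsingle] at hsum
      have hJpos : 0 < J i j := by
        rcases lt_max_iff.mp hjpos with h | h
        · exact h
        · exact absurd h (lt_irrefl 0)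
      rw [max_eq_left hJpos.le] at hsum
      exact hsum
    exact ⟨j, hjmem, hJj, hle⟩
  -- a successor function
  obtain ⟨step, hstepA⟩ : ∃ step : V → V, ∀ v, v ≠ vOUT →
      G.Adj v (step v) ∧ J v (step v) = 1 ∧
      ∀ k ∈ G.neighborFinset v, k ≠ step v → J v k ≤ 0 := by
    choose nxt hmem hJ1 hle using hsucc
    refine ⟨fun v => if h : v = vOUT then v else nxt v h, fun v hv => ?_⟩
    simp only [dif_neg hv]
    exact ⟨(SimpleGraph.mem_neighborFinset _ _ _).mp (hmem v hv), hJ1 v hv, hle v hv⟩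
  -- potential drops by at least 1 along a successor arc
  have hφdrop : ∀ v, v ≠ vOUT → 1 ≤ φ v - φ (step v) := by
    intro v hv
    obtain ⟨hadj, hJ1, -⟩ := hstepA v hv
    have hedge : s(v, step v) ∈ G.edgeSet := hadj
    have h0 := hg0 _ hedge
    have h1 := hg1 _ hedge
    have heq : g s(v, step v) * (φ v - φ (step v)) = 1 := by rw [← hJ]; exact hJ1
    have hgpos : 0 < g s(v, step v) := by
      rcases h0.lt_or_eq with h | h
      · exact h
      · exfalso; rw [← h, zero_mul] at heq; norm_num at heq
    have hd : φ v - φ (step v) = 1 / g s(v, step v) :=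
      eq_one_div_of_mul_eq_one_left (by linarith [heq, mul_comm (g s(v, step v)) (φ v - φ (step v))])
    rw [hd]
    exact one_le_one_div hgpos h1
  -- potential decrease along iterates
  have hdrop : ∀ (w : V) (n : ℕ), (∀ m, m < n → step^[m] w ≠ vOUT) →
      φ (step^[n] w) + n ≤ φ w := by
    intro w n
    induction n with
    | zero => intro _; simp
    | succ n ih =>
      intro h
      have h2 := ih fun m hm => h m (hm.trans (Nat.lt_succ_self n))
      have h3 : step^[n] w ≠ vOUT := h n (Nat.lt_succ_self n)
      have h4 := hφdrop _ h3
      rw [Function.iterate_succ_apply']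
      push_cast
      linarith
  have hstrict : ∀ (w : V) (n : ℕ), (∀ m, m < n → step^[m] w ≠ vOUT) →
      ∀ k l, k < l → l ≤ n → φ (step^[l] w) < φ (step^[k] w) := by
    intro w n hn k l hkl hln
    have h1 : ∀ m, m < l - k → step^[m] (step^[k] w) ≠ vOUT := by
      intro m hm
      rw [← Function.iterate_add_apply]
      exact hn (m + k) (by omega)
    have h2 := hdrop (step^[k] w) (l - k) h1
    rw [← Function.iterate_add_apply] at h2
    have h3 : l - k + k = l := by omega
    rw [h3] at h2
    have h4 : (1 : ℝ) ≤ ((l - k : ℕ) : ℝ) := by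
      have : 1 ≤ l - k := by omega
      exact_mod_cast this
    linarith
  -- termination at vOUT
  have hterm : ∀ w : V, ∃ m, step^[m] w = vOUT := by
    intro w
    by_contra h
    push_neg at h
    have hinj : Set.InjOn (fun m => step^[m] w) (Finset.range (N + 1)) := by
      intro a ha b hb hab
      have hab : step^[a] w = step^[b] w := hab
      simp only [Finset.coe_range, Set.mem_Iio] at ha hb
      by_contra hne2
      rcases Nat.lt_or_ge a b with hlt | hge
      · have := hstrict w (N + 1) (fun m _ => h m) a b hlt (by omega)
        rw [hab] at this; exact lt_irrefl _ this
      · have hlt : b < a := by omega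
        have := hstrict w (N + 1) (fun m _ => h m) b a hlt (by omega)
        rw [hab] at this; exact lt_irrefl _ this
    have hcard := Finset.card_le_card_of_injOn (fun m => step^[m] w)
      (fun x _ => Finset.mem_univ _) hinj
    rw [Finset.card_range, Finset.card_univ, ← hNcard] at hcard
    omega
  -- the path length K
  set K := Nat.find (hterm vIN) with hKdef
  have hKvOUT : step^[K] vIN = vOUT := Nat.find_spec (hterm vIN)
  have hKmin : ∀ m, m < K → step^[m] vIN ≠ vOUT := fun m hm => Nat.find_min (hterm vIN) hm
  set f : ℕ → V := fun n => step^[n] vIN with hfdef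
  have hf0 : f 0 = vIN := rfl
  have hfs : ∀ n, f (n + 1) = step (f n) := fun n => Function.iterate_succ_apply' step n vIN
  have hfK : f K = vOUT := hKvOUT
  have hfne : ∀ m, m < K → f m ≠ vOUT := hKmin
  have hK1 : 1 ≤ K := by
    by_contra h
    have h0 : K = 0 := by omega
    rw [h0] at hfK
    exact hne hfK
  have hfstrict : ∀ k l, k < l → l ≤ K → φ (f l) < φ (f k) :=
    fun k l hkl hlK => hstrict vIN K hKmin k l hkl hlK
  have hfinj : ∀ k l, k ≤ K → l ≤ K → f k = f l → k = l := by
    intro k l hk hl hkl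
    by_contra hne2
    rcases Nat.lt_or_ge k l with hlt | hge
    · have := hfstrict k l hlt hl; rw [hkl] at this; exact lt_irrefl _ this
    · have hlt : l < k := by omega
      have := hfstrict l k hlt hk; rw [hkl] at this; exact lt_irrefl _ this
  -- successor arcs along the path
  have hadjf : ∀ n, n < K → G.Adj (f n) (f (n + 1)) ∧ J (f n) (f (n + 1)) = 1 ∧
      1 ≤ φ (f n) - φ (f (n + 1)) := by
    intro n hn
    have h1 : f n ≠ vOUT := hfne n hn
    obtain ⟨ha, hb, -⟩ := hstepA (f n) h1
    rw [hfs n]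
    exact ⟨ha, hb, hφdrop _ h1⟩
  -- inflow at interior vertices
  have hinflow : ∀ i, i ≠ vIN → i ≠ vOUT →
      ∑ j ∈ G.neighborFinset i, max (J j i) 0 = 1 := by
    intro i h1 h2
    have hk := hKirchhoff i h1 h2
    have ho : ∑ j ∈ G.neighborFinset i, max (J i j) 0 = 1 := by
      rw [← hO]; exact hOone i h2
    have hterm' : ∀ j, max (J j i) 0 = max (J i j) 0 - J i j := by
      intro j
      rw [hJanti i j]
      rcases le_total (J i j) 0 with h | h
      · rw [max_eq_left (neg_nonneg.mpr h), max_eq_right h]; ring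
      · rw [max_eq_right (neg_nonpos.mpr h), max_eq_left h]; ring
    calc ∑ j ∈ G.neighborFinset i, max (J j i) 0
        = ∑ j ∈ G.neighborFinset i, (max (J i j) 0 - J i j) :=
          Finset.sum_congr rfl fun j _ => hterm' j
      _ = 1 - 0 := by rw [Finset.sum_sub_distrib, ho, hk]
      _ = 1 := by ring
  -- any positive in-current has value 1
  have hone : ∀ i j, j ∈ G.neighborFinset i → 0 < J j i → J j i = 1 := by
    intro i j hjm hjp
    have hjOUT : j ≠ vOUT := by
      intro h'
      have h0 : ∑ k ∈ G.neighborFinset vOUT, max (J vOUT k) 0 = 0 := by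
        rw [← hO]; exact hOout
      have himem : i ∈ G.neighborFinset vOUT := by
        rw [← h']
        rw [SimpleGraph.mem_neighborFinset] at hjm ⊢
        exact hjm.symm
      have hz := (Finset.sum_eq_zero_iff_of_nonneg (fun k _ => le_max_right _ _)).mp h0 i himem
      have hle0 : J vOUT i ≤ 0 := by
        calc J vOUT i ≤ max (J vOUT i) 0 := le_max_left _ _
          _ = 0 := hz
      rw [h'] at hjp
      linarith
    obtain ⟨hadj', hJ1', hle'⟩ := hstepA j hjOUT
    by_cases hij : i = step j
    · rw [hij]; exact hJ1'
    · have himem : i ∈ G.neighborFinset j := by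
        rw [SimpleGraph.mem_neighborFinset] at hjm ⊢
        exact hjm.symm
      have := hle' i himem hij
      linarith
  -- interior vertices have a unique in-neighbor with positive current
  have hpred : ∀ i j1 j2, j1 ∈ G.neighborFinset i → j2 ∈ G.neighborFinset i →
      i ≠ vIN → i ≠ vOUT → 0 < J j1 i → 0 < J j2 i → j1 = j2 := by
    intro i j1 j2 hm1 hm2 h1 h2 hp1 hp2
    by_contra hne12
    have he1 : J j1 i = 1 := hone i j1 hm1 hp1
    have he2 : J j2 i = 1 := hone i j2 hm2 hp2
    have hflow := hinflow i h1 h2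
    have hsub : {j1, j2} ⊆ G.neighborFinset i := by
      intro x hx
      rcases Finset.mem_insert.mp hx with h | h
      · rw [h]; exact hm1
      · rw [Finset.mem_singleton.mp h]; exact hm2
    have hge := Finset.sum_le_sum_of_subset_of_nonneg hsub
      (fun k _ _ => le_max_right (J k i) 0)
    rw [Finset.sum_pair hne12] at hge
    rw [he1, he2] at hge
    norm_num at hge
    linarith
  -- coverage: every vertex is on the path
  have hcover : ∀ v : V, ∃ k, k ≤ K ∧ f k = v := by
    by_contra h
    push_neg at h
    obtain ⟨w, hw⟩ := h
    have hclosed : ∀ v : V, (∀ k, k ≤ K → f k ≠ v) → ∀ k, k ≤ K → f k ≠ step v := by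
      intro v hv k hk hkv
      have hvOUT : v ≠ vOUT := by
        intro h'
        exact hv K le_rfl (by rw [hfK, h'])
      obtain ⟨hadj, hJ1, hle'⟩ := hstepA v hvOUT
      rcases Nat.eq_zero_or_pos k with hk0 | hkpos
      · -- step v = f 0 = vIN, but vIN has degree 1
        subst hk0
        have hsv : step v = vIN := hkv.symm.trans hf0
        have hvmem : v ∈ G.neighborFinset vIN := by
          rw [SimpleGraph.mem_neighborFinset]
          rw [hsv] at hadj
          exact hadj.symm
        have hf1mem : f 1 ∈ G.neighborFinset vIN := by
          rw [SimpleGraph.mem_neighborFinset]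
          have := (hadjf 0 (by omega)).1
          rwa [hf0] at this
        have hcard1 : (G.neighborFinset vIN).card = 1 := by
          rw [SimpleGraph.card_neighborFinset_eq_degree]; exact hdegIN
        obtain ⟨a, ha⟩ := Finset.card_eq_one.mp hcard1
        rw [ha, Finset.mem_singleton] at hvmem hf1mem
        exact hv 1 hK1 (hf1mem.trans hvmem.symm)
      · rcases eq_or_lt_of_le hk with hkK | hkK
        · -- step v = f K = vOUT, but vOUT has degree 1
          subst hkK
          have hsv : step v = vOUT := hkv.symm.trans hfK
          have hvmem : v ∈ G.neighborFinset vOUT := by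
            rw [SimpleGraph.mem_neighborFinset]
            rw [hsv] at hadj
            exact hadj.symm
          have hprev : f (K - 1) ∈ G.neighborFinset vOUT := by
            rw [SimpleGraph.mem_neighborFinset]
            have h1 := (hadjf (K - 1) (by omega)).1
            have h2 : K - 1 + 1 = K := by omega
            rw [h2, hfK] at h1
            exact h1.symm
          have hcard1 : (G.neighborFinset vOUT).card = 1 := by
            rw [SimpleGraph.card_neighborFinset_eq_degree]; exact hdegOUT
          obtain ⟨a, ha⟩ := Finset.card_eq_one.mp hcard1
          rw [ha, Finset.mem_singleton] at hvmem hprev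
          exact hv (K - 1) (by omega) (hprev.trans hvmem.symm)
        · -- interior vertex f k would have two in-neighbors
          have hiIN : f k ≠ vIN := by
            intro h'
            have := hfinj k 0 hk (by omega) (h'.trans hf0.symm)
            omega
          have hiOUT : f k ≠ vOUT := hfne k hkK
          have hm1 : f (k - 1) ∈ G.neighborFinset (f k) := by
            rw [SimpleGraph.mem_neighborFinset]
            have h1 := (hadjf (k - 1) (by omega)).1
            have h2 : k - 1 + 1 = k := by omega
            rw [h2] at h1
            exact h1.symm
          have hm2 : v ∈ G.neighborFinset (f k) := by
            rw [SimpleGraph.mem_neighborFinset]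
            rw [← hkv] at hadj
            exact hadj.symm
          have hp1 : 0 < J (f (k - 1)) (f k) := by
            have h1 := (hadjf (k - 1) (by omega)).2.1
            have h2 : k - 1 + 1 = k := by omega
            rw [h2] at h1
            rw [h1]; norm_num
          have hp2 : 0 < J v (f k) := by
            rw [← hkv] at hJ1
            rw [hJ1]; norm_num
          have := hpred (f k) (f (k - 1)) v hm1 hm2 hiIN hiOUT hp1 hp2
          exact hv (k - 1) (by omega) this
    have hiter : ∀ m, ∀ k, k ≤ K → f k ≠ step^[m] w := by
      intro m
      induction m with
      | zero => simpa using hw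
      | succ m ih =>
        rw [Function.iterate_succ_apply']
        exact hclosed _ ih
    obtain ⟨m, hm⟩ := hterm w
    exact hiter m K le_rfl (by rw [hm, hfK])
  -- construct the walk
  have hwalkaux : ∀ (d n : ℕ), n + d = K → ∃ p : G.Walk (f n) vOUT,
      p.support = (List.range (d + 1)).map (fun i => f (n + i)) ∧
      p.darts.map (fun dd => (dd.fst, dd.snd)) =
        (List.range d).map (fun i => (f (n + i), f (n + i + 1))) := by
    intro d
    induction d with
    | zero =>
      intro n hn
      have h0 : f n = vOUT := by
        have : n = K := by omega
        rw [this, hfK]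
      refine ⟨SimpleGraph.Walk.nil.copy h0.symm rfl, ?_, ?_⟩
      · simp [SimpleGraph.Walk.support_copy, List.range_succ, h0]
      · simp [SimpleGraph.Walk.darts_copy]
    | succ d ih =>
      intro n hn
      have hnK : n < K := by omega
      have hadj : G.Adj (f n) (f (n + 1)) := (hadjf n hnK).1
      obtain ⟨q, hq1, hq2⟩ := ih (n + 1) (by omega)
      refine ⟨SimpleGraph.Walk.cons hadj q, ?_, ?_⟩
      · rw [SimpleGraph.Walk.support_cons, hq1]
        conv_rhs => rw [List.range_succ_eq_map, List.map_cons, List.map_map]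
        refine congrArg₂ List.cons rfl (List.map_congr_left fun i _ => ?_)
        simp only [Function.comp_apply]
        have e1 : n + 1 + i = n + (i + 1) := by omega
        rw [e1]
      · rw [SimpleGraph.Walk.darts_cons, List.map_cons, hq2]
        conv_rhs => rw [List.range_succ_eq_map, List.map_cons, List.map_map]
        refine congrArg₂ List.cons rfl (List.map_congr_left fun i _ => ?_)
        simp only [Function.comp_apply]
        have e1 : n + 1 + i = n + (i + 1) := by omega
        rw [e1]
  obtain ⟨p0, hsup0, hdarts0⟩ := hwalkaux K 0 (by omega)
  set p : G.Walk vIN vOUT := p0.copy hf0 rfl with hpdef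
  have hsup : p.support = (List.range (K + 1)).map f := by
    rw [hpdef, SimpleGraph.Walk.support_copy, hsup0]
    apply List.map_congr_left
    intro i _
    simp
  have hdarts : p.darts.map (fun dd => (dd.fst, dd.snd)) =
      (List.range K).map (fun i => (f i, f (i + 1))) := by
    rw [hpdef, SimpleGraph.Walk.darts_copy, hdarts0]
    apply List.map_congr_left
    intro i _
    simp
  -- the walk is a Hamiltonian path
  have hnodup : p.support.Nodup := by
    rw [hsup]
    apply List.Nodup.map_on _ List.nodup_range
    intro x hx y hy hxy
    rw [List.mem_range] at hx hy
    exact hfinj x y (by omega) (by omega) hxy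
  have hpath : p.IsPath := (SimpleGraph.Walk.isPath_def p).mpr hnodup
  have hmemsup : ∀ w, w ∈ p.support := by
    intro w
    rw [hsup]
    obtain ⟨k, hk, hfk⟩ := hcover w
    exact List.mem_map.mpr ⟨k, List.mem_range.mpr (by omega), hfk⟩
  have hham : p.IsHamiltonian := hpath.isHamiltonian_of_mem hmemsup
  -- K = N - 1
  have hKN : K + 1 = N := by
    have h1 : p.support.length = K + 1 := by
      rw [hsup, List.length_map, List.length_range]
    have h2 : p.support.toFinset = Finset.univ :=
      Finset.eq_univ_of_forall fun v => List.mem_toFinset.mpr (hmemsup v)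
    have h3 : p.support.toFinset.card = p.support.length := List.toFinset_card_of_nodup hnodup
    rw [h2, Finset.card_univ, ← hNcard] at h3
    omega
  -- unit potential drops
  have hKcast : (K : ℝ) = (N : ℝ) - 1 := by
    have : (K : ℝ) + 1 = (N : ℝ) := by exact_mod_cast hKN
    linarith
  have hunit : ∀ k, k < K → φ (f k) - φ (f (k + 1)) = 1 := by
    have htel : ∑ k ∈ Finset.range K, (φ (f k) - φ (f (k + 1))) = φ (f 0) - φ (f K) :=
      Finset.sum_range_sub' (fun k => φ (f k)) K
    rw [hf0, hfK, hφIN, hφOUT] at htel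
    have hsumD : ∑ k ∈ Finset.range K, (φ (f k) - φ (f (k + 1)) - 1) = 0 := by
      rw [Finset.sum_sub_distrib, htel, Finset.sum_const, Finset.card_range]
      simp [hKcast]
    have hzero := (Finset.sum_eq_zero_iff_of_nonneg
      (fun k hk => by
        have := (hadjf k (List.mem_range.mp (by simpa using hk))).2.2
        linarith)).mp hsumD
    intro k hk
    have := hzero k (Finset.mem_range.mpr hk)
    linarith
  -- conductance is 1 on path arcs
  have hgone : ∀ k, k < K → g s(f k, f (k + 1)) = 1 := by
    intro k hk
    have h1 := (hadjf k hk).2.1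
    rw [hJ] at h1
    rw [hunit k hk, mul_one] at h1
    exact h1
  -- description of path edges
  have hedges_eq : p.edges = p.darts.map SimpleGraph.Dart.edge := rfl
  have hedge_mem : ∀ i, i < K → s(f i, f (i + 1)) ∈ p.edges := by
    intro i hi
    have hmem : (f i, f (i + 1)) ∈ p.darts.map (fun dd => (dd.fst, dd.snd)) := by
      rw [hdarts]
      exact List.mem_map.mpr ⟨i, List.mem_range.mpr hi, rfl⟩
    obtain ⟨dd, hdd, heq⟩ := List.mem_map.mp hmem
    injection heq with h1 h2
    have hE : dd.edge = s(f i, f (i + 1)) := by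
      rw [← h1, ← h2]
      rfl
    rw [← hE, hedges_eq]
    exact List.mem_map_of_mem hdd
  have hedge_form : ∀ e ∈ p.edges, ∃ i, i < K ∧ e = s(f i, f (i + 1)) := by
    intro e he
    rw [hedges_eq] at he
    obtain ⟨dd, hdd, heq⟩ := List.mem_map.mp he
    have hpair : (dd.fst, dd.snd) ∈ p.darts.map (fun dd => (dd.fst, dd.snd)) :=
      List.mem_map.mpr ⟨dd, hdd, rfl⟩
    rw [hdarts] at hpair
    obtain ⟨i, hi, hieq⟩ := List.mem_map.mp hpair
    refine ⟨i, List.mem_range.mp hi, ?_⟩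
    injection hieq with h1 h2
    rw [← heq]
    rw [h1, h2]
    rfl
  -- off-path edges have zero conductance
  have hoff : ∀ a b : V, G.Adj a b → s(a, b) ∉ p.edges → g s(a, b) = 0 := by
    intro a b hab hnot
    have hJle : ∀ x y : V, G.Adj x y → s(x, y) ∉ p.edges → J x y ≤ 0 := by
      intro x y hxy hnot'
      by_contra hpos
      push_neg at hpos
      have hxOUT : x ≠ vOUT := by
        intro h'
        have h0 : ∑ k ∈ G.neighborFinset vOUT, max (J vOUT k) 0 = 0 := by
          rw [← hO]; exact hOout
        have hymem : y ∈ G.neighborFinset vOUT := by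
          rw [← h']
          exact (SimpleGraph.mem_neighborFinset _ _ _).mpr hxy
        have hz := (Finset.sum_eq_zero_iff_of_nonneg
          (fun k _ => le_max_right _ _)).mp h0 y hymem
        have hle0 : J vOUT y ≤ 0 := by
          calc J vOUT y ≤ max (J vOUT y) 0 := le_max_left _ _
            _ = 0 := hz
        rw [h'] at hpos
        linarith
      obtain ⟨hadj', hJ1', hle'⟩ := hstepA x hxOUT
      have hymem : y ∈ G.neighborFinset x := (SimpleGraph.mem_neighborFinset _ _ _).mpr hxy
      have hystep : y = step x := by
        by_contra h'
        have := hle' y hymem h'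
        linarith
      obtain ⟨k, hkK, hfk⟩ := hcover x
      have hkltK : k < K := by
        rcases eq_or_lt_of_le hkK with h | h
        · exfalso; rw [h, hfK] at hfk; exact hxOUT hfk.symm
        · exact h
      have hstepk : f (k + 1) = step x := by rw [hfs, hfk]
      have : s(x, y) = s(f k, f (k + 1)) := by
        rw [hfk, hstepk, hystep]
      rw [this] at hnot'
      exact hnot' (hedge_mem k hkltK)
    have h1 : J a b ≤ 0 := hJle a b hab hnot
    have h2 : J b a ≤ 0 := by
      apply hJle b a hab.symm
      rwa [Sym2.eq_swap]
    have h3 : J a b = 0 := by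
      rw [hJanti] at h2
      linarith
    rw [hJ] at h3
    rcases mul_eq_zero.mp h3 with h | h
    · exact h
    · exfalso
      obtain ⟨k, hk, hfk⟩ := hcover a
      obtain ⟨l, hl, hfl⟩ := hcover b
      have hklne : k ≠ l := by
        intro h'
        rw [h', hfl] at hfk
        exact (G.ne_of_adj hab) hfk.symm
      have hφne : φ a ≠ φ b := by
        rw [← hfk, ← hfl]
        rcases Nat.lt_or_ge k l with hlt | hge
        · exact ne_of_gt (hfstrict k l hlt hl)
        · exact ne_of_lt (hfstrict l k (by omega) hk)
      exact hφne (by linarith)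
  -- dart properties
  have hdartprop : ∀ d ∈ p.darts, φ d.fst - φ d.snd = 1 ∧ J d.fst d.snd = 1 := by
    intro d hd
    have hpair : (d.fst, d.snd) ∈ p.darts.map (fun dd => (dd.fst, dd.snd)) :=
      List.mem_map.mpr ⟨d, hd, rfl⟩
    rw [hdarts] at hpair
    obtain ⟨i, hi, hieq⟩ := List.mem_map.mp hpair
    rw [List.mem_range] at hi
    injection hieq with h1 h2
    rw [← h1, ← h2]
    exact ⟨hunit i hi, (hadjf i hi).2.1⟩
  -- edge characterization
  have hiff : ∀ e ∈ G.edgeSet, g e = 1 ↔ e ∈ p.edges := by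
    intro e he
    induction e with
    | _ a b =>
      have hab : G.Adj a b := he
      constructor
      · intro hg
        by_contra hnot
        have := hoff a b hab hnot
        rw [this] at hg
        norm_num at hg
      · intro hmem
        obtain ⟨i, hi, hieq⟩ := hedge_form _ hmem
        rw [hieq]
        exact hgone i hi
  refine ⟨?_, p, hham, hiff, hdartprop⟩
  intro e he
  induction e with
  | _ a b =>
    have hab : G.Adj a b := he
    by_cases hmem : s(a, b) ∈ p.edges
    · right
      obtain ⟨i, hi, hieq⟩ := hedge_form _ hmem
      rw [hieq]
      exact hgone i hi
    · left
      exact hoff a b hab hmem
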